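/- Let G be a finite group acting 2-transitively on a finite set Ω with |Ω| = n, and let der(G) be the number of derangements of G. Then for every g ∈ G and every pair a, b ∈ Ω: the number of elements h ∈ G such that g h⁻¹ is a derangement and h·a = b equals der(G)/(n−1) if g·a ≠ b, and equals 0 if g·a = b. -/

import Mathlib

/-- `g` is a derangement for the action of `G` on `Ω` if it fixes no point of `Ω`. -/
def IsDerangement (G : Type*) [Group G] (Ω : Type*) [MulAction G Ω] (g : G) : Prop :=
  ∀ α : Ω, g • α ≠ α

lemma conj_derangement {G : Type*} [Group G] {Ω : Type*} [MulAction G Ω] {x : G} (k : G)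
    (hx : IsDerangement G Ω x) : IsDerangement G Ω (k * x * k⁻¹) := by
  intro α h
  apply hx (k⁻¹ • α)
  have h1 : k • (x • (k⁻¹ • α)) = α := by
    simpa [mul_smul] using h
  rw [← inv_smul_smul k (x • (k⁻¹ • α)), h1]

/-- Let `G` act 2-transitively on a finite set `Ω` with `|Ω| = n` and let `der(G)` be the number
of derangements in `G`.  For `g ∈ G` and `a, b ∈ Ω`, the number of `h ∈ G` with `g h⁻¹` a
derangement and `h·a = b` is `der(G)/(n-1)` if `g·a ≠ b`, and `0` if `g·a = b`. -/
theorem count_derangement_neighbours_star {G : Type*} [Group G] [Fintype G]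
    {Ω : Type*} [Fintype Ω] [MulAction G Ω]
    (h2trans : ∀ a b c d : Ω, a ≠ b → c ≠ d → ∃ g : G, g • a = c ∧ g • b = d)
    (g : G) (a b : Ω) :
    (g • a ≠ b →
      Nat.card {h : G | IsDerangement G Ω (g * h⁻¹) ∧ h • a = b} * (Fintype.card Ω - 1)
        = Nat.card {x : G | IsDerangement G Ω x}) ∧
    (g • a = b →
      Nat.card {h : G | IsDerangement G Ω (g * h⁻¹) ∧ h • a = b} = 0) := by
  classical
  have hcard : ∀ (p : G → Prop), Nat.card {x : G | p x} = (Finset.univ.filter p).card := by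
    intro p
    rw [Nat.card_eq_fintype_card]
    convert Fintype.card_subtype p using 2
    rfl
  set D : Ω → Finset G := fun c => Finset.univ.filter (fun x => IsDerangement G Ω x ∧ x • b = c)
    with hD
  constructor
  · intro hne
    -- translate the LHS set to D (g • a)
    have step1 : (@Finset.filter G
        (fun h : G => IsDerangement G Ω (g * h⁻¹) ∧ h • a = b)
        (fun h => Classical.propDecidable _) Finset.univ).card = (D (g • a)).card := by
      refine Finset.card_bij' (fun h _ => g * h⁻¹) (fun x _ => x⁻¹ * g) ?_ ?_ ?_ ?_
      · intro h hh
        simp only [hD, Finset.mem_filter, Finset.mem_univ, true_and] at hh ⊢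
        refine ⟨hh.1, ?_⟩
        have : h⁻¹ • b = a := by rw [← hh.2, inv_smul_smul]
        rw [mul_smul, this]
      · intro x hx
        simp only [hD, Finset.mem_filter, Finset.mem_univ, true_and] at hx ⊢
        constructor
        · have : g * (x⁻¹ * g)⁻¹ = x := by group
          rw [this]; exact hx.1
        · rw [mul_smul, ← hx.2, inv_smul_smul]
      · intro h _; group
      · intro x _; group
    have hDb : (D b).card = 0 := by
      rw [Finset.card_eq_zero, hD, Finset.filter_eq_empty_iff]
      rintro x - ⟨hder, hxb⟩
      exact hder b hxb
    have hconst : ∀ c : Ω, c ≠ b → (D c).card = (D (g • a)).card := by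
      intro c hc
      obtain ⟨k, hkb, hkc⟩ := h2trans b c b (g • a) hc.symm hne.symm
      have hkb' : k⁻¹ • b = b := by rw [inv_smul_eq_iff, hkb]
      refine Finset.card_bij' (fun x _ => k * x * k⁻¹) (fun y _ => k⁻¹ * y * k) ?_ ?_ ?_ ?_
      · intro x hx
        simp only [hD, Finset.mem_filter, Finset.mem_univ, true_and] at hx ⊢
        refine ⟨conj_derangement k hx.1, ?_⟩
        rw [mul_smul, mul_smul, hkb', hx.2, hkc]
      · intro y hy
        simp only [hD, Finset.mem_filter, Finset.mem_univ, true_and] at hy ⊢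
        constructor
        · have : k⁻¹ * y * k = k⁻¹ * y * (k⁻¹)⁻¹ := by group
          rw [this]; exact conj_derangement k⁻¹ hy.1
        · rw [mul_smul, mul_smul, hkb, hy.2, ← hkc, inv_smul_smul]
      · intro x _; group
      · intro y _; group
    have hpart : (Finset.univ.filter (fun x : G => IsDerangement G Ω x)).card
        = ∑ c ∈ Finset.univ, (D c).card := by
      rw [Finset.card_eq_sum_card_fiberwise (f := fun x : G => x • b) (t := Finset.univ)
        (fun x _ => Finset.mem_univ _)]
      refine Finset.sum_congr rfl fun c _ => ?_
      rw [hD, Finset.filter_filter]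
    rw [hcard, hcard]
    rw [step1, hpart,
      ← Finset.sum_erase_add Finset.univ _ (Finset.mem_univ b), hDb, add_zero,
      Finset.sum_congr rfl (fun c hc => hconst c (Finset.ne_of_mem_erase hc)),
      Finset.sum_const, Finset.card_erase_of_mem (Finset.mem_univ b), Finset.card_univ,
      smul_eq_mul, mul_comm]
  · intro heq
    rw [Nat.card_eq_fintype_card, Fintype.card_eq_zero_iff]
    constructor
    rintro ⟨h, hder, hb⟩
    apply hder b
    have : h⁻¹ • b = a := by rw [← hb, inv_smul_smul]
    rw [mul_smul, this, heq]
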